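/- arXiv:1402.1860 — 3 statements merged into one kernel-verified Lean document; each statement's English description precedes it below -/
import Mathlib

section
/- The function ξ₁(ρ₁,ρ₂) = (1-ρ₁ρ₂)(2-ρ₁²-ρ₂²)/((1-ρ₁²)(1-ρ₂²)) satisfies ξ₁(ρ₁,ρ₂) ≥ 2 for all ρ₁,ρ₂ ∈ [0,1), with equality if and only if ρ₁ = ρ₂. -/
noncomputable def xi1 (r1 r2 : ℝ) : ℝ :=
  (1 - r1 * r2) * (2 - r1 ^ 2 - r2 ^ 2) / ((1 - r1 ^ 2) * (1 - r2 ^ 2))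

theorem stmt_0 (r1 r2 : ℝ) (h1 : r1 ∈ Set.Ico (0 : ℝ) 1) (h2 : r2 ∈ Set.Ico (0 : ℝ) 1) :
    2 ≤ xi1 r1 r2 ∧ (xi1 r1 r2 = 2 ↔ r1 = r2) := by
  obtain ⟨ha0, ha1⟩ := h1
  obtain ⟨hb0, hb1⟩ := h2
  have hD : 0 < (1 - r1 ^ 2) * (1 - r2 ^ 2) := mul_pos (by nlinarith) (by nlinarith)
  have key : (1 - r1 * r2) * (2 - r1 ^ 2 - r2 ^ 2) - 2 * ((1 - r1 ^ 2) * (1 - r2 ^ 2))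
      = (r1 - r2) ^ 2 * (1 + r1 * r2) := by ring
  have hpos : 0 < 1 + r1 * r2 := by nlinarith
  unfold xi1
  constructor
  · rw [le_div_iff₀ hD]
    nlinarith [sq_nonneg (r1 - r2)]
  · rw [div_eq_iff hD.ne']
    constructor
    · intro h
      have : (r1 - r2) ^ 2 * (1 + r1 * r2) = 0 := by linarith [key, h]
      have h2 : (r1 - r2) ^ 2 = 0 := by
        rcases mul_eq_zero.mp this with h | h
        · exact h
        · linarith
      have := pow_eq_zero_iff (n := 2) (by norm_num) |>.mp h2
      linarith
    · intro h; subst h; ring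
end

section
/- For any L > 0 and ρ₁,ρ₂ ∈ [0,1), the Kullback-Leibler contrast d_KL(ρ₁,ρ₂|L) = L·[(1-ρ₁ρ₂)(2-ρ₁²-ρ₂²)/((1-ρ₁²)(1-ρ₂²)) − 2] is nonnegative, symmetric in (ρ₁,ρ₂), and equals zero if and only if ρ₁ = ρ₂. -/
noncomputable def dKL (L r1 r2 : ℝ) : ℝ := L * (xi1 r1 r2 - 2)

theorem stmt_1 (L r1 r2 : ℝ) (hL : 0 < L)
    (h1 : r1 ∈ Set.Ico (0 : ℝ) 1) (h2 : r2 ∈ Set.Ico (0 : ℝ) 1) :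
    0 ≤ dKL L r1 r2 ∧ dKL L r1 r2 = dKL L r2 r1 ∧ (dKL L r1 r2 = 0 ↔ r1 = r2) := by
  obtain ⟨h10, h11⟩ := h1
  obtain ⟨h20, h21⟩ := h2
  have d1 : (0:ℝ) < 1 - r1 ^ 2 := by nlinarith
  have d2 : (0:ℝ) < 1 - r2 ^ 2 := by nlinarith
  have key : dKL L r1 r2 =
      L * ((r1 - r2) ^ 2 * (1 + r1 * r2) / ((1 - r1 ^ 2) * (1 - r2 ^ 2))) := by
    unfold dKL xi1
    field_simp
    ring
  have hpos : (0:ℝ) < 1 + r1 * r2 := by nlinarith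
  have hden : (0:ℝ) < (1 - r1 ^ 2) * (1 - r2 ^ 2) := mul_pos d1 d2
  refine ⟨?_, ?_, ?_⟩
  · rw [key]
    positivity
  · unfold dKL xi1
    ring_nf
  · rw [key]
    constructor
    · intro h
      have h' : (r1 - r2) ^ 2 * (1 + r1 * r2) / ((1 - r1 ^ 2) * (1 - r2 ^ 2)) = 0 :=
        (mul_eq_zero.mp h).resolve_left hL.ne'
      have hnum : (r1 - r2) ^ 2 * (1 + r1 * r2) = 0 :=
        (div_eq_zero_iff.mp h').resolve_right hden.ne'
      have hsq : (r1 - r2) ^ 2 = 0 := by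
        rcases mul_eq_zero.mp hnum with h'' | h''
        · exact h''
        · nlinarith
      have := pow_eq_zero_iff (n := 2) (by norm_num) |>.mp hsq
      linarith
    · intro h
      subst h
      simp
end

section
/- The function ξ₂(ρ₁,ρ₂) = √((1-ρ₁²)(1-ρ₂²)) / (4 − (ρ₁+ρ₂)²) satisfies 0 < ξ₂(ρ₁,ρ₂) ≤ 1/4 for all ρ₁,ρ₂ ∈ [0,1), with equality ξ₂ = 1/4 if and only if ρ₁ = ρ₂. -/
noncomputable def xi2 (r1 r2 : ℝ) : ℝ :=
  Real.sqrt ((1 - r1 ^ 2) * (1 - r2 ^ 2)) / (4 - (r1 + r2) ^ 2)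

theorem stmt_2 (r1 r2 : ℝ) (h1 : r1 ∈ Set.Ico (0 : ℝ) 1) (h2 : r2 ∈ Set.Ico (0 : ℝ) 1) :
    (0 < xi2 r1 r2 ∧ xi2 r1 r2 ≤ 1 / 4) ∧ (xi2 r1 r2 = 1 / 4 ↔ r1 = r2) := by
  obtain ⟨h10, h11⟩ := h1
  obtain ⟨h20, h21⟩ := h2
  have ha : 0 < 1 - r1 ^ 2 := by nlinarith
  have hb : 0 < 1 - r2 ^ 2 := by nlinarith
  have hd : 0 < 4 - (r1 + r2) ^ 2 := by nlinarith
  set s := Real.sqrt ((1 - r1 ^ 2) * (1 - r2 ^ 2)) with hs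
  have hsnn : 0 ≤ s := Real.sqrt_nonneg _
  have hs2 : s ^ 2 = (1 - r1 ^ 2) * (1 - r2 ^ 2) := Real.sq_sqrt (by positivity)
  have hspos : 0 < s := Real.sqrt_pos.mpr (by positivity)
  have hle : 4 * s ≤ 4 - (r1 + r2) ^ 2 := by
    nlinarith [sq_nonneg (r1 - r2), sq_nonneg ((1 - r1 ^ 2) + (1 - r2 ^ 2) - 2 * s),
      sq_nonneg (r1 * r2), sq_nonneg (r1 + r2)]
  refine ⟨⟨div_pos hspos hd, ?_⟩, ?_, ?_⟩
  · rw [xi2, ← hs, div_le_div_iff₀ hd (by norm_num)]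
    linarith
  · intro heq
    have h4s : 4 * s = 4 - (r1 + r2) ^ 2 := by
      rw [xi2, ← hs, div_eq_div_iff hd.ne' (by norm_num : (4:ℝ) ≠ 0)] at heq
      linarith
    have : (r1 - r2) ^ 2 ≤ 0 := by
      nlinarith [sq_nonneg ((1 - r1 ^ 2) + (1 - r2 ^ 2) - 2 * s)]
    have := sq_nonneg (r1 - r2)
    have : (r1 - r2) ^ 2 = 0 := le_antisymm ‹_› ‹_›
    have := pow_eq_zero_iff (n := 2) (by norm_num) |>.mp this
    linarith [sub_eq_zero.mp this]
  · rintro rfl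
    have hsv : s = 1 - r1 ^ 2 := by
      rw [hs, Real.sqrt_mul_self ha.le]
    rw [xi2, ← hs, hsv, div_eq_div_iff hd.ne' (by norm_num : (4:ℝ) ≠ 0)]
    ring
end
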